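/- arXiv:1912.10041 — 2 statements merged into one kernel-verified Lean document; each statement's English description precedes it below -/
import Mathlib

section
/- In any meadow (a commutative ring with multiplicative identity and a total multiplicative inverse operation satisfying (x⁻¹)⁻¹ = x and x·(x·x⁻¹) = x), the multiplicative inverse of zero is zero: 0⁻¹ = 0. -/
/-- A meadow: a commutative ring with multiplicative identity and a total
multiplicative inverse operation satisfying `(x⁻¹)⁻¹ = x` and `x·(x·x⁻¹) = x`. -/
class Meadow (M : Type*) extends Zero M, One M, Add M, Mul M, Neg M, Inv M where
  add_assoc : ∀ x y z : M, x + y + z = x + (y + z)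
  add_comm : ∀ x y : M, x + y = y + x
  add_zero : ∀ x : M, x + 0 = x
  add_neg : ∀ x : M, x + -x = 0
  mul_assoc : ∀ x y z : M, x * y * z = x * (y * z)
  mul_comm : ∀ x y : M, x * y = y * x
  mul_one : ∀ x : M, x * 1 = x
  mul_add : ∀ x y z : M, x * (y + z) = x * y + x * z
  inv_inv : ∀ x : M, x⁻¹⁻¹ = x
  mul_mul_inv : ∀ x : M, x * (x * x⁻¹) = x

lemma meadow_mul_zero {M : Type*} [Meadow M] (x : M) : x * 0 = 0 := by
  have h : x * 0 + x * 0 = x * 0 := by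
    rw [← Meadow.mul_add, Meadow.add_zero]
  calc x * 0 = x * 0 + 0 := (Meadow.add_zero _).symm
    _ = x * 0 + (x * 0 + -(x * 0)) := by rw [Meadow.add_neg]
    _ = (x * 0 + x * 0) + -(x * 0) := (Meadow.add_assoc _ _ _).symm
    _ = x * 0 + -(x * 0) := by rw [h]
    _ = 0 := Meadow.add_neg _

/-- In any meadow, the multiplicative inverse of zero is zero. -/
theorem meadow_inv_zero (M : Type*) [Meadow M] : (0 : M)⁻¹ = 0 := by
  have h := Meadow.mul_mul_inv (0 : M)⁻¹
  rw [Meadow.inv_inv, meadow_mul_zero, meadow_mul_zero] at h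
  exact h.symm
end

section
/- P is multiplicative over alternative composition: P(t + t', T + T') = P(t,T) · P(t',T'), where T + T' = {u + u' : u ∈ T, u' ∈ T'}, for all closed pACPr terms t, t' and sets T, T' of closed pACPr terms. -/
/-- Terms of pACPr over a set `A` of actions: action constants and the inaction
constant `δ` (`cst none`), alternative composition `alt`, sequential
composition `seqc`, probabilistic choice `pch π`, parallel composition `par`,
left merge `lmerge`, communication merge `cmerge`, encapsulation `enc H`, and
constants `fix k E` standing for the solution `⟨X_k | E⟩` of a (possibly
countably infinite) recursive specification `E` for its variable `X_k`.
Variables are indexed by natural numbers. -/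
inductive Tm (A : Type) : Type
  | var : ℕ → Tm A
  | cst : Option A → Tm A
  | alt : Tm A → Tm A → Tm A
  | seqc : Tm A → Tm A → Tm A
  | pch : ℝ → Tm A → Tm A → Tm A
  | par : Tm A → Tm A → Tm A
  | lmerge : Tm A → Tm A → Tm A
  | cmerge : Tm A → Tm A → Tm A
  | enc : Set A → Tm A → Tm A
  | fix : ℕ → (ℕ → Tm A) → Tm A

namespace Tm

variable {A : Type}

/-- `mkrec E t` is `⟨t | E⟩`: `t` with every variable `X_n` replaced by the
constant `⟨X_n | E⟩`. -/
def mkrec (E : ℕ → Tm A) : Tm A → Tm A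
  | var n => fix n E
  | cst a => cst a
  | alt t u => alt (mkrec E t) (mkrec E u)
  | seqc t u => seqc (mkrec E t) (mkrec E u)
  | pch p t u => pch p (mkrec E t) (mkrec E u)
  | par t u => par (mkrec E t) (mkrec E u)
  | lmerge t u => lmerge (mkrec E t) (mkrec E u)
  | cmerge t u => cmerge (mkrec E t) (mkrec E u)
  | enc H t => enc H (mkrec E t)
  | fix k F => fix k F

/-- Whether a term is an action constant. -/
def isActB : Tm A → Bool
  | cst (some _) => true
  | _ => false

/-- Well-formedness `Ok v g t`: `v` records whether (guarded) variable
occurrences are allowed (i.e. whether we are inside the body of a recursive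
specification), `g` records whether we are under an action guard `a · _`.
Probabilities of probabilistic choices must lie in `[0,1]`, and the bodies of
recursive specifications must be guarded (every variable occurrence inside a
subterm `a · t'`). -/
def Ok : Bool → Bool → Tm A → Prop
  | v, g, var _ => v = true ∧ g = true
  | _, _, cst _ => True
  | v, g, alt t u => Ok v g t ∧ Ok v g u
  | v, g, seqc t u => Ok v g t ∧ Ok v (g || isActB t) u
  | v, g, pch p t u => 0 ≤ p ∧ p ≤ 1 ∧ Ok v g t ∧ Ok v g u
  | v, g, par t u => Ok v g t ∧ Ok v g u
  | v, g, lmerge t u => Ok v g t ∧ Ok v g u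
  | v, g, cmerge t u => Ok v g t ∧ Ok v g u
  | v, g, enc _ t => Ok v g t
  | _, _, fix _ E => ∀ i, Ok true false (E i)

/-- Closed pACPr terms: no free variables (and all recursive specifications
guarded, all probabilities in `[0,1]`). -/
def Closed (t : Tm A) : Prop := Ok false false t

/-- The positive rules for the probabilistic transition relations `⇝π` of the
structural operational semantics of pACPr. -/
inductive PStepP : Tm A → ℝ → Tm A → Prop
  | cst (a : Option A) : PStepP (cst a) 1 (cst a)
  | alt {x x' y y' : Tm A} {p q : ℝ} :
      PStepP x p x' → PStepP y q y' → PStepP (alt x y) (p * q) (alt x' y')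
  | seqc {x x' : Tm A} {p : ℝ} (y : Tm A) :
      PStepP x p x' → PStepP (seqc x y) p (seqc x' y)
  | pch {x y z : Tm A} {q q' : ℝ} (p : ℝ) :
      PStepP x q z → PStepP y q' z →
      PStepP (pch p x y) (p * q + (1 - p) * q') z
  | par {x x' y y' : Tm A} {p q : ℝ} :
      PStepP x p x' → PStepP y q y' → PStepP (par x y) (p * q) (par x' y')
  | lmerge {x x' y y' : Tm A} {p q : ℝ} :
      PStepP x p x' → PStepP y q y' →
      PStepP (lmerge x y) (p * q) (lmerge x' y')
  | cmerge {x x' y y' : Tm A} {p q : ℝ} :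
      PStepP x p x' → PStepP y q y' →
      PStepP (cmerge x y) (p * q) (cmerge x' y')
  | enc {x x' : Tm A} {p : ℝ} (H : Set A) :
      PStepP x p x' → PStepP (enc H x) p (enc H x')
  | fix {E : ℕ → Tm A} {k : ℕ} {p : ℝ} {z : Tm A} :
      PStepP (mkrec E (E k)) p z → PStepP (fix k E) p z

/-- The probabilistic transition relations `⇝π` of pACPr: the positive rules,
together with the closing rule assigning probability `0` to every pair that
admits no transition with a probability different from `0`. -/
def PStep (t : Tm A) (p : ℝ) (t' : Tm A) : Prop :=
  PStepP t p t' ∨ (p = 0 ∧ ∀ q : ℝ, q ≠ 0 → ¬ PStepP t q t')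

end Tm

namespace Tm

variable {A : Type}

/-- The probability distribution function `P` induced by the probabilistic
transition relations: `P(t,t') = Σ {π : t ⇝π t'}` (the sum of the set
`Π(t,t')` of probabilities). -/
noncomputable def P (t t' : Tm A) : ℝ :=
  ∑' p : {q : ℝ // PStep t q t'}, (p : ℝ)

/-- `P(t,T) = Σ_{t' ∈ T} P(t,t')`. -/
noncomputable def PS (t : Tm A) (T : Set (Tm A)) : ℝ :=
  ∑' u : T, P t (u : Tm A)

end Tm

namespace Tm

variable {A : Type}

/-- Determinism of the positive probabilistic transition rules: the probability
is determined by source and target. -/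
theorem pstepp_det : ∀ {t : Tm A} {p u}, PStepP t p u → ∀ {q}, PStepP t q u → p = q := by
  intro t p u h1
  induction h1 with
  | cst a => intro q h2; cases h2; rfl
  | alt hx hy ihx ihy =>
      intro q h2
      cases h2 with
      | alt hx' hy' => rw [ihx hx', ihy hy']
  | seqc y hx ih =>
      intro q h2
      cases h2 with
      | seqc _ hx' => exact ih hx'
  | pch p hx hy ihx ihy =>
      intro q h2
      cases h2 with
      | pch _ hx' hy' => rw [ihx hx', ihy hy']
  | par hx hy ihx ihy =>
      intro q h2
      cases h2 with
      | par hx' hy' => rw [ihx hx', ihy hy']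
  | lmerge hx hy ihx ihy =>
      intro q h2
      cases h2 with
      | lmerge hx' hy' => rw [ihx hx', ihy hy']
  | cmerge hx hy ihx ihy =>
      intro q h2
      cases h2 with
      | cmerge hx' hy' => rw [ihx hx', ihy hy']
  | enc H hx ih =>
      intro q h2
      cases h2 with
      | enc _ hx' => exact ih hx'
  | fix hx ih =>
      intro q h2
      cases h2 with
      | fix hx' => exact ih hx'

lemma isActB_mkrec (E : ℕ → Tm A) (s : Tm A) : isActB (mkrec E s) = isActB s := by
  cases s <;> rfl

lemma ok_mkrec (E : ℕ → Tm A) (hE : ∀ i, Ok true false (E i)) :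
    ∀ (s : Tm A) (v g v' : Bool), Ok v g s → Ok v' g (mkrec E s) := by
  intro s
  induction s with
  | var n =>
      intro v g v' _
      show Ok v' g (fix n E)
      exact fun i => hE i
  | cst a => intro v g v' _; trivial
  | alt x y ihx ihy =>
      intro v g v' h
      exact ⟨ihx v g v' h.1, ihy v g v' h.2⟩
  | seqc x y ihx ihy =>
      intro v g v' h
      refine ⟨ihx v g v' h.1, ?_⟩
      show Ok v' (g || isActB (mkrec E x)) (mkrec E y)
      rw [isActB_mkrec]
      exact ihy v (g || isActB x) v' h.2
  | pch p x y ihx ihy =>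
      intro v g v' h
      exact ⟨h.1, h.2.1, ihx v g v' h.2.2.1, ihy v g v' h.2.2.2⟩
  | par x y ihx ihy =>
      intro v g v' h
      exact ⟨ihx v g v' h.1, ihy v g v' h.2⟩
  | lmerge x y ihx ihy =>
      intro v g v' h
      exact ⟨ihx v g v' h.1, ihy v g v' h.2⟩
  | cmerge x y ihx ihy =>
      intro v g v' h
      exact ⟨ihx v g v' h.1, ihy v g v' h.2⟩
  | enc H x ih =>
      intro v g v' h
      exact ih v g v' h
  | fix k F ih =>
      intro v g v' h
      exact h

/-- Probabilities of positive transitions from well-formed terms are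
nonnegative. -/
theorem pstepp_nonneg : ∀ {t : Tm A} {p u}, PStepP t p u →
    ∀ v g, Ok v g t → 0 ≤ p := by
  intro t p u h
  induction h with
  | cst a => intro v g _; norm_num
  | alt hx hy ihx ihy =>
      intro v g hok
      exact mul_nonneg (ihx v g hok.1) (ihy v g hok.2)
  | seqc y hx ih =>
      intro v g hok
      exact ih v g hok.1
  | pch p hx hy ihx ihy =>
      intro v g hok
      obtain ⟨hp0, hp1, h1, h2⟩ := hok
      have := ihx v g h1
      have := ihy v g h2
      nlinarith
  | par hx hy ihx ihy =>
      intro v g hok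
      exact mul_nonneg (ihx v g hok.1) (ihy v g hok.2)
  | lmerge hx hy ihx ihy =>
      intro v g hok
      exact mul_nonneg (ihx v g hok.1) (ihy v g hok.2)
  | cmerge hx hy ihx ihy =>
      intro v g hok
      exact mul_nonneg (ihx v g hok.1) (ihy v g hok.2)
  | enc H hx ih =>
      intro v g hok
      exact ih v g hok
  | fix hx ih =>
      intro v g hok
      exact ih false false (ok_mkrec _ (fun i => hok i) _ true false false (hok _))

open scoped Classical in
/-- The value of `P t u`: the unique probability of a positive transition from
`t` to `u` if one exists, and `0` otherwise. -/
noncomputable def Pval (t u : Tm A) : ℝ :=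
  if h : ∃ q, PStepP t q u then h.choose else 0

lemma pstep_iff (t u : Tm A) (q : ℝ) : PStep t q u ↔ q = Pval t u := by
  classical
  unfold Pval
  split_ifs with h
  · constructor
    · rintro (hq | ⟨rfl, hq⟩)
      · exact pstepp_det hq h.choose_spec
      · by_contra hne
        exact hq _ (fun h0 => hne (h0 ▸ rfl)) h.choose_spec
    · rintro rfl
      exact Or.inl h.choose_spec
  · constructor
    · rintro (hq | ⟨rfl, _⟩)
      · exact absurd ⟨q, hq⟩ h
      · rfl
    · rintro rfl
      exact Or.inr ⟨rfl, fun q hq hP => h ⟨q, hP⟩⟩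

lemma P_eq_Pval (t u : Tm A) : P t u = Pval t u := by
  unfold P
  have hb : PStep t (Pval t u) u := (pstep_iff t u _).mpr rfl
  refine tsum_eq_single (⟨Pval t u, hb⟩ : {q : ℝ // PStep t q u}) ?_
  intro b' hb'
  exact absurd (Subtype.ext ((pstep_iff t u _).mp b'.2)) hb'

lemma Pval_eq_of_pstepp {t u : Tm A} {q : ℝ} (h : PStepP t q u) : Pval t u = q := by
  classical
  unfold Pval
  have h' : ∃ q, PStepP t q u := ⟨q, h⟩
  rw [dif_pos h']
  exact pstepp_det h'.choose_spec h

lemma Pval_eq_zero {t u : Tm A} (h : ¬ ∃ q, PStepP t q u) : Pval t u = 0 := by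
  classical
  unfold Pval
  rw [dif_neg h]

lemma P_nonneg {t : Tm A} (ht : Closed t) (u : Tm A) : 0 ≤ P t u := by
  classical
  rw [P_eq_Pval]
  unfold Pval
  split_ifs with h
  · exact pstepp_nonneg h.choose_spec false false ht
  · exact le_refl 0

lemma P_alt (t t' u u' : Tm A) :
    P (Tm.alt t t') (Tm.alt u u') = P t u * P t' u' := by
  classical
  rw [P_eq_Pval, P_eq_Pval, P_eq_Pval]
  by_cases h1 : ∃ q, PStepP t q u
  · by_cases h2 : ∃ q, PStepP t' q u'
    · rw [Pval_eq_of_pstepp h1.choose_spec, Pval_eq_of_pstepp h2.choose_spec,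
        Pval_eq_of_pstepp (PStepP.alt h1.choose_spec h2.choose_spec)]
    · rw [Pval_eq_zero h2, Pval_eq_zero, mul_zero]
      rintro ⟨r, hr⟩
      cases hr with
      | alt hx hy => exact h2 ⟨_, hy⟩
  · rw [Pval_eq_zero h1, Pval_eq_zero, zero_mul]
    rintro ⟨r, hr⟩
    cases hr with
    | alt hx hy => exact h1 ⟨_, hx⟩

lemma tsum_eq_toReal_tsum_ofReal {ι : Type*} (f : ι → ℝ) (hf : ∀ i, 0 ≤ f i) :
    ∑' i, f i = (∑' i, ENNReal.ofReal (f i)).toReal := by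
  by_cases h : Summable f
  · rw [← ENNReal.ofReal_tsum_of_nonneg hf h, ENNReal.toReal_ofReal (tsum_nonneg hf)]
  · rw [tsum_eq_zero_of_not_summable h]
    have htop : ∑' i, ENNReal.ofReal (f i) = ⊤ := by
      by_contra htop
      have := ENNReal.summable_toReal htop
      apply h
      have heq : (fun i => (ENNReal.ofReal (f i)).toReal) = f := by
        funext i; exact ENNReal.toReal_ofReal (hf i)
      rwa [heq] at this
    simp [htop]

end Tm

open Tm in
/-- `P` is multiplicative over alternative composition:
`P(t + t', T + T') = P(t,T) · P(t',T')`, where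
`T + T' = {u + u' : u ∈ T, u' ∈ T'}`, for all closed pACPr terms `t`, `t'` and
sets `T`, `T'` of closed pACPr terms. -/
theorem ps_alt_mul {A : Type} (t t' : Tm A) (T T' : Set (Tm A))
    (ht : Closed t) (ht' : Closed t')
    (hT : ∀ u ∈ T, Closed u) (hT' : ∀ u ∈ T', Closed u) :
    PS (Tm.alt t t') {w : Tm A | ∃ u ∈ T, ∃ u' ∈ T', w = Tm.alt u u'} =
      PS t T * PS t' T' := by
  classical
  let m : ↥T × ↥T' → ↥{w : Tm A | ∃ u ∈ T, ∃ u' ∈ T', w = Tm.alt u u'} :=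
    fun p => ⟨Tm.alt p.1 p.2, ⟨p.1, p.1.2, p.2, p.2.2, rfl⟩⟩
  have hbij : Function.Bijective m := by
    constructor
    · rintro ⟨⟨a, ha⟩, ⟨b, hb⟩⟩ ⟨⟨c, hc⟩, ⟨d, hd⟩⟩ h
      simp only [m, Subtype.mk.injEq, Tm.alt.injEq] at h
      simp [Prod.ext_iff, Subtype.ext_iff, h.1, h.2]
    · rintro ⟨w, hw⟩
      obtain ⟨u, hu, u', hu', rfl⟩ := hw
      exact ⟨(⟨u, hu⟩, ⟨u', hu'⟩), rfl⟩
  let e := Equiv.ofBijective m hbij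
  unfold PS
  rw [← e.tsum_eq]
  have hstep : ∀ p : ↥T × ↥T',
      P (Tm.alt t t') ((e p : Tm A)) = P t p.1 * P t' p.2 := by
    intro p
    show P (Tm.alt t t') (Tm.alt (p.1 : Tm A) (p.2 : Tm A)) = _
    exact P_alt t t' p.1 p.2
  rw [tsum_congr hstep]
  have hnn : ∀ p : ↥T × ↥T', 0 ≤ P t p.1 * P t' p.2 :=
    fun p => mul_nonneg (P_nonneg ht _) (P_nonneg ht' _)
  rw [tsum_eq_toReal_tsum_ofReal _ hnn,
    tsum_eq_toReal_tsum_ofReal (fun u : ↥T => P t u) (fun u => P_nonneg ht _),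
    tsum_eq_toReal_tsum_ofReal (fun u : ↥T' => P t' u) (fun u => P_nonneg ht' _),
    ← ENNReal.toReal_mul]
  congr 1
  have hmul : ∀ p : ↥T × ↥T',
      ENNReal.ofReal (P t p.1 * P t' p.2) =
        ENNReal.ofReal (P t p.1) * ENNReal.ofReal (P t' p.2) :=
    fun p => ENNReal.ofReal_mul (P_nonneg ht _)
  rw [tsum_congr hmul,
    ENNReal.tsum_prod (f := fun (a : ↥T) (b : ↥T') =>
      ENNReal.ofReal (P t a) * ENNReal.ofReal (P t' b))]
  simp_rw [ENNReal.tsum_mul_left]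
  rw [ENNReal.tsum_mul_right]
end
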